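/- arXiv:math-ph/0303029 — 2 statements merged into one kernel-verified Lean document; each statement's English description precedes it below -/
import Mathlib

section
/- Define $h_F(x) = \tfrac{1}{2}[\tanh(\gamma(x+\bar{x})) - \tanh(\gamma(x-\bar{x}))]$ for $\gamma, \bar{x} > 0$. Then for the complex translation $x \mapsto x + ib$ with $\gamma|b| < \pi/4$, one has $|h_F(x+ib)| \le \frac{e^{2\gamma\bar{x}}}{(e^{2\gamma x} + e^{-2\gamma x})\cos(2\gamma b) + e^{2\gamma\bar{x}} + e^{-2\gamma\bar{x}}}$ for all $x \in \mathbb{R}$. -/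
open Real

/-- Bound on the complex translation of the cut-off function
`h_F(x) = (tanh(γ(x+x̄)) - tanh(γ(x-x̄)))/2`. -/
theorem hF_complex_translation_bound
    (γ xbar b : ℝ) (hγ : 0 < γ) (hxbar : 0 < xbar) (hb : γ * |b| < π / 4) (x : ℝ) :
    ‖(Complex.tanh ((γ : ℂ) * ((x : ℂ) + (b : ℂ) * Complex.I + (xbar : ℂ)))
        - Complex.tanh ((γ : ℂ) * ((x : ℂ) + (b : ℂ) * Complex.I - (xbar : ℂ)))) / 2‖
      ≤ Real.exp (2 * γ * xbar) /
        ((Real.exp (2 * γ * x) + Real.exp (-(2 * γ * x))) * Real.cos (2 * γ * b)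
          + Real.exp (2 * γ * xbar) + Real.exp (-(2 * γ * xbar))) := by
  have hpi : 0 < π := Real.pi_pos
  have hb1 := le_abs_self b
  have hb2 := neg_abs_le b
  -- positivity of the cosines
  have hcos2 : 0 < Real.cos (2 * γ * b) := by
    apply Real.cos_pos_of_mem_Ioo
    constructor <;> nlinarith
  have hcos1 : 0 < Real.cos (γ * b) := by
    apply Real.cos_pos_of_mem_Ioo
    constructor <;> nlinarith
  set P : ℂ := (γ : ℂ) * ((x : ℂ) + (b : ℂ) * Complex.I + (xbar : ℂ)) with hPdef
  set Q : ℂ := (γ : ℂ) * ((x : ℂ) + (b : ℂ) * Complex.I - (xbar : ℂ)) with hQdef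
  -- general fact : cosh of (a + c*I) for real a c
  have cosh_form : ∀ a c : ℝ, Complex.cosh ((a : ℂ) + (c : ℂ) * Complex.I)
      = ((Real.cosh a * Real.cos c : ℝ) : ℂ) + ((Real.sinh a * Real.sin c : ℝ) : ℂ) * Complex.I := by
    intro a c
    rw [Complex.cosh_add, Complex.cosh_mul_I, Complex.sinh_mul_I]
    push_cast [Complex.ofReal_cosh, Complex.ofReal_sinh, Complex.ofReal_cos, Complex.ofReal_sin]
    ring
  have cosh_ne : ∀ a c : ℝ, 0 < Real.cos c → Complex.cosh ((a : ℂ) + (c : ℂ) * Complex.I) ≠ 0 := by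
    intro a c hc h
    have hre : (Complex.cosh ((a : ℂ) + (c : ℂ) * Complex.I)).re = Real.cosh a * Real.cos c := by
      rw [cosh_form]
      simp only [Complex.add_re, Complex.mul_re, Complex.I_re, Complex.I_im, Complex.ofReal_re,
        Complex.ofReal_im]
      ring
    have h0 : Real.cosh a * Real.cos c = 0 := by rw [← hre, h]; simp
    nlinarith [Real.cosh_pos (x := a)]
  have hPform : P = ((γ * (x + xbar) : ℝ) : ℂ) + ((γ * b : ℝ) : ℂ) * Complex.I := by
    rw [hPdef]; push_cast; ring
  have hQform : Q = ((γ * (x - xbar) : ℝ) : ℂ) + ((γ * b : ℝ) : ℂ) * Complex.I := by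
    rw [hQdef]; push_cast; ring
  have hP : Complex.cosh P ≠ 0 := by rw [hPform]; exact cosh_ne _ _ hcos1
  have hQ : Complex.cosh Q ≠ 0 := by rw [hQform]; exact cosh_ne _ _ hcos1
  -- the key identity
  have key : (Complex.tanh P - Complex.tanh Q) / 2
      = Complex.sinh (P - Q) / (Complex.cosh (P + Q) + Complex.cosh (P - Q)) := by
    have h2 : Complex.cosh (P + Q) + Complex.cosh (P - Q)
        = 2 * (Complex.cosh P * Complex.cosh Q) := by
      rw [Complex.cosh_add, Complex.cosh_sub]; ring
    rw [Complex.tanh_eq_sinh_div_cosh, Complex.tanh_eq_sinh_div_cosh,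
      div_sub_div _ _ hP hQ, ← Complex.sinh_sub, h2, div_div]
    ring_nf
  have hPQsub : P - Q = ((2 * γ * xbar : ℝ) : ℂ) := by rw [hPdef, hQdef]; push_cast; ring
  have hPQadd : P + Q = ((2 * γ * x : ℝ) : ℂ) + ((2 * γ * b : ℝ) : ℂ) * Complex.I := by
    rw [hPdef, hQdef]; push_cast; ring
  rw [key, hPQsub, hPQadd, cosh_form, ← Complex.ofReal_sinh, ← Complex.ofReal_cosh]
  set D : ℂ := ((Real.cosh (2 * γ * x) * Real.cos (2 * γ * b) : ℝ) : ℂ)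
      + ((Real.sinh (2 * γ * x) * Real.sin (2 * γ * b) : ℝ) : ℂ) * Complex.I
      + ((Real.cosh (2 * γ * xbar) : ℝ) : ℂ) with hDdef
  have hDre : D.re = Real.cosh (2 * γ * x) * Real.cos (2 * γ * b) + Real.cosh (2 * γ * xbar) := by
    rw [hDdef]
    simp only [Complex.add_re, Complex.mul_re, Complex.I_re, Complex.I_im, Complex.ofReal_re,
      Complex.ofReal_im]
    ring
  have hDrepos : 0 < D.re := by
    rw [hDre]
    have := Real.cosh_pos (x := 2 * γ * x)
    have := Real.cosh_pos (x := 2 * γ * xbar)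
    nlinarith
  have hDnorm : D.re ≤ ‖D‖ := by
    exact Complex.re_le_norm D
  have hsinh_pos : 0 < Real.sinh (2 * γ * xbar) := Real.sinh_pos_iff.2 (by positivity)
  rw [norm_div, Complex.norm_real]
  rw [Real.norm_eq_abs, abs_of_pos hsinh_pos]
  have hstep1 : Real.sinh (2 * γ * xbar) / ‖D‖ ≤ Real.sinh (2 * γ * xbar) / D.re :=
    div_le_div_of_nonneg_left hsinh_pos.le hDrepos hDnorm
  refine hstep1.trans ?_
  have hsinh_le : Real.sinh (2 * γ * xbar) ≤ Real.exp (2 * γ * xbar) / 2 := by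
    rw [Real.sinh_eq]
    have := Real.exp_pos (-(2 * γ * xbar))
    linarith
  have hgoal_den : (Real.exp (2 * γ * x) + Real.exp (-(2 * γ * x))) * Real.cos (2 * γ * b)
      + Real.exp (2 * γ * xbar) + Real.exp (-(2 * γ * xbar)) = 2 * D.re := by
    rw [hDre, Real.cosh_eq, Real.cosh_eq]; ring
  rw [hgoal_den]
  rw [div_le_div_iff₀ hDrepos (by positivity)]
  nlinarith [hsinh_le, hDrepos]
end

section
/- Let $J_0(x) = \tfrac{1}{2}[\tanh(\gamma(x+x_1)) - \tanh(\gamma(x-x_1))]$ with $\gamma, x_1 > 0$, analytically continued to $x+ib$ with $2\gamma|b| < \pi/2$. Then $|J_0(x+ib)| \le \frac{1}{\cos(2\gamma b)} e^{2\gamma(x+x_1)}$ for $x < 0$ and $|J_0(x+ib)| \le \frac{1}{\cos(2\gamma b)} e^{-2\gamma(x-x_1)}$ for $x > 0$. -/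
open Real

lemma norm_cosh_lower (u v : ℝ) (hv : 0 ≤ Real.cos v) :
    Real.cosh u * Real.cos v ≤ ‖Complex.cosh ((u:ℂ) + (v:ℂ) * Complex.I)‖ := by
  have h : Complex.cosh ((u:ℂ) + (v:ℂ)*Complex.I)
      = ((Real.cosh u * Real.cos v : ℝ) : ℂ) + ((Real.sinh u * Real.sin v : ℝ) : ℂ) * Complex.I := by
    rw [Complex.cosh_add, Complex.cosh_mul_I, Complex.sinh_mul_I,
      ← Complex.ofReal_cosh, ← Complex.ofReal_sinh, ← Complex.ofReal_cos, ← Complex.ofReal_sin]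
    push_cast
    ring
  rw [h, Complex.norm_add_mul_I]
  have h0 : 0 ≤ Real.cosh u * Real.cos v := mul_nonneg (Real.cosh_pos u).le hv
  calc Real.cosh u * Real.cos v = Real.sqrt ((Real.cosh u * Real.cos v)^2) := by
        rw [Real.sqrt_sq h0]
    _ ≤ _ := Real.sqrt_le_sqrt (by nlinarith [sq_nonneg (Real.sinh u * Real.sin v)])

lemma neg_one_lt_tanh' (c : ℝ) : -1 < Real.tanh c := by
  rw [Real.tanh_eq_sinh_div_cosh, Real.sinh_eq, Real.cosh_eq]
  rw [lt_div_iff₀ (by positivity)]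
  nlinarith [Real.exp_pos c, Real.exp_pos (-c)]

lemma tanh_sub_le_exp (a c : ℝ) : Real.tanh a - Real.tanh c ≤ 2 * Real.exp (2*a) := by
  have h1 := neg_one_lt_tanh' c
  have h2 : Real.tanh a + 1 ≤ 2 * Real.exp (2*a) := by
    rw [Real.tanh_eq_sinh_div_cosh, Real.sinh_eq, Real.cosh_eq, div_add_one (by positivity),
      div_le_iff₀ (by positivity)]
    have e1 : Real.exp (2*a) = Real.exp a * Real.exp a := by rw [← Real.exp_add]; ring_nf
    have e2 : Real.exp a * Real.exp (-a) = 1 := by rw [← Real.exp_add]; simp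
    nlinarith [Real.exp_pos a, Real.exp_pos (-a)]
  linarith

lemma tanh_sub_le_exp' (a c : ℝ) : Real.tanh a - Real.tanh c ≤ 2 * Real.exp (-(2*c)) := by
  have h := tanh_sub_le_exp (-c) (-a)
  rw [Real.tanh_neg, Real.tanh_neg] at h
  have h' : Real.tanh a - Real.tanh c ≤ 2 * Real.exp (2 * (-c)) := by linarith
  simpa [mul_comm, neg_mul, mul_neg] using h'

lemma tanh_sub_eq (a c : ℝ) :
    Real.tanh a - Real.tanh c = Real.sinh (a - c) / (Real.cosh a * Real.cosh c) := by
  rw [Real.sinh_sub, Real.tanh_eq_sinh_div_cosh, Real.tanh_eq_sinh_div_cosh]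
  field_simp

lemma main_bound (a c v : ℝ) (hv : 0 < Real.cos v) (hac : c ≤ a) :
    ‖(Complex.tanh ((a:ℂ) + (v:ℂ)*Complex.I) - Complex.tanh ((c:ℂ)+(v:ℂ)*Complex.I))/2‖
      ≤ (Real.tanh a - Real.tanh c) / (2 * Real.cos v ^ 2) := by
  set A : ℂ := (a:ℂ) + (v:ℂ)*Complex.I
  set C : ℂ := (c:ℂ) + (v:ℂ)*Complex.I
  have hA : Real.cosh a * Real.cos v ≤ ‖Complex.cosh A‖ := norm_cosh_lower a v hv.le
  have hC : Real.cosh c * Real.cos v ≤ ‖Complex.cosh C‖ := norm_cosh_lower c v hv.le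
  have hApos : (0:ℝ) < Real.cosh a * Real.cos v := mul_pos (Real.cosh_pos a) hv
  have hCpos : (0:ℝ) < Real.cosh c * Real.cos v := mul_pos (Real.cosh_pos c) hv
  have hAne : Complex.cosh A ≠ 0 := by
    intro h; rw [h] at hA; simp at hA; linarith
  have hCne : Complex.cosh C ≠ 0 := by
    intro h; rw [h] at hC; simp at hC; linarith
  have hid : (Complex.tanh A - Complex.tanh C)/2
      = Complex.sinh (A - C) / (2 * Complex.cosh A * Complex.cosh C) := by
    rw [Complex.tanh_eq_sinh_div_cosh, Complex.tanh_eq_sinh_div_cosh, Complex.sinh_sub]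
    field_simp
  have hAC : A - C = ((a - c : ℝ) : ℂ) := by
    simp only [A, C]; push_cast; ring
  have hsnn : 0 ≤ Real.sinh (a - c) := by
    have := Real.sinh_nonneg_iff (x := a - c)
    rw [this]; linarith
  rw [hid, hAC, ← Complex.ofReal_sinh, norm_div]
  rw [Complex.norm_real, Real.norm_eq_abs, abs_of_nonneg hsnn]
  have hnorm : ‖(2:ℂ) * Complex.cosh A * Complex.cosh C‖
      = 2 * ‖Complex.cosh A‖ * ‖Complex.cosh C‖ := by
    simp [norm_mul]
  rw [hnorm]
  have key : Real.sinh (a - c) / (2 * (Real.cosh a * Real.cos v) * (Real.cosh c * Real.cos v))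
      = (Real.tanh a - Real.tanh c) / (2 * Real.cos v ^ 2) := by
    rw [tanh_sub_eq, div_div]
    congr 1
    ring
  rw [← key]
  apply div_le_div_of_nonneg_left hsnn (by positivity)
  have := mul_le_mul hA hC hCpos.le (norm_nonneg _)
  nlinarith

/-- Pointwise bound on the complex translation of
`J₀(x) = (tanh(γ(x+x₁)) - tanh(γ(x-x₁)))/2`. -/
theorem J0_complex_translation_bound
    (γ x₁ b : ℝ) (hγ : 0 < γ) (hx₁ : 0 < x₁) (hb : 2 * γ * |b| < π / 2) (x : ℝ) :
    (x < 0 →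
      ‖(Complex.tanh ((γ : ℂ) * ((x : ℂ) + (b : ℂ) * Complex.I + (x₁ : ℂ)))
          - Complex.tanh ((γ : ℂ) * ((x : ℂ) + (b : ℂ) * Complex.I - (x₁ : ℂ)))) / 2‖
        ≤ (1 / Real.cos (2 * γ * b)) * Real.exp (2 * γ * (x + x₁))) ∧
    (0 < x →
      ‖(Complex.tanh ((γ : ℂ) * ((x : ℂ) + (b : ℂ) * Complex.I + (x₁ : ℂ)))
          - Complex.tanh ((γ : ℂ) * ((x : ℂ) + (b : ℂ) * Complex.I - (x₁ : ℂ)))) / 2‖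
        ≤ (1 / Real.cos (2 * γ * b)) * Real.exp (-(2 * γ) * (x - x₁))) := by
  have harg1 : (γ : ℂ) * ((x : ℂ) + (b : ℂ) * Complex.I + (x₁ : ℂ))
      = ((γ * (x + x₁) : ℝ) : ℂ) + ((γ * b : ℝ) : ℂ) * Complex.I := by push_cast; ring
  have harg2 : (γ : ℂ) * ((x : ℂ) + (b : ℂ) * Complex.I - (x₁ : ℂ))
      = ((γ * (x - x₁) : ℝ) : ℂ) + ((γ * b : ℝ) : ℂ) * Complex.I := by push_cast; ring
  have hv2 : |2 * (γ * b)| < π / 2 := by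
    rw [abs_mul, abs_two, abs_mul, abs_of_pos hγ]
    calc 2 * (γ * |b|) = 2 * γ * |b| := by ring
      _ < π / 2 := hb
  have hv2' := abs_lt.mp hv2
  have hcos2 : 0 < Real.cos (2 * (γ * b)) :=
    Real.cos_pos_of_mem_Ioo ⟨by linarith [hv2'.1], hv2'.2⟩
  have hcosv : 0 < Real.cos (γ * b) := by
    apply Real.cos_pos_of_mem_Ioo
    constructor
    · rcases abs_lt.mp (show |γ * b| < π / 2 by
        nlinarith [abs_nonneg (γ * b), abs_mul 2 (γ*b), abs_two (α := ℝ)]) with ⟨h1, h2⟩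
      linarith
    · rcases abs_lt.mp (show |γ * b| < π / 2 by
        nlinarith [abs_nonneg (γ * b), abs_mul 2 (γ*b), abs_two (α := ℝ)]) with ⟨h1, h2⟩
      linarith
  have hcossq : Real.cos (2 * (γ * b)) ≤ Real.cos (γ * b) ^ 2 := by
    rw [Real.cos_two_mul]
    nlinarith [Real.cos_le_one (γ * b), Real.neg_one_le_cos (γ * b)]
  set a := γ * (x + x₁) with ha
  set c := γ * (x - x₁) with hc
  have hac : c ≤ a := by rw [ha, hc]; nlinarith
  have htnn : 0 ≤ Real.tanh a - Real.tanh c := by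
    rw [tanh_sub_eq]
    apply div_nonneg _ (by positivity)
    rw [Real.sinh_nonneg_iff]
    linarith
  have hmain := main_bound a c (γ * b) hcosv hac
  rw [harg1, harg2]
  have hcos2' : Real.cos (2 * γ * b) = Real.cos (2 * (γ * b)) := by ring_nf
  have final : ∀ E : ℝ, Real.tanh a - Real.tanh c ≤ 2 * E → 0 < E →
      ‖(Complex.tanh ((a:ℂ) + ((γ*b:ℝ):ℂ)*Complex.I)
          - Complex.tanh ((c:ℂ) + ((γ*b:ℝ):ℂ)*Complex.I))/2‖
        ≤ (1 / Real.cos (2 * γ * b)) * E := by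
    intro E hE hEpos
    refine hmain.trans ?_
    rw [hcos2', one_div, div_le_iff₀ (by positivity)]
    rw [show (Real.cos (2*(γ*b)))⁻¹ * E * (2 * Real.cos (γ*b)^2)
        = E * (2 * Real.cos (γ*b)^2) / Real.cos (2*(γ*b)) by ring]
    rw [le_div_iff₀ hcos2]
    nlinarith [sq_nonneg (Real.cos (γ*b))]
  constructor
  · intro _
    have := final (Real.exp (2 * γ * (x + x₁))) ?_ (Real.exp_pos _)
    · exact this
    · have := tanh_sub_le_exp a c
      rw [show (2 * a) = 2 * γ * (x + x₁) by rw [ha]; ring] at this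
      exact this
  · intro _
    have := final (Real.exp (-(2 * γ) * (x - x₁))) ?_ (Real.exp_pos _)
    · exact this
    · have := tanh_sub_le_exp' a c
      rw [show (-(2 * c)) = -(2 * γ) * (x - x₁) by rw [hc]; ring] at this
      exact this
end
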